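/- Let f be C³ on a neighbourhood of x₀ and fix u, w ∈ E. Then the four-point mixed-derivative stencil applied to a first-order direction ε•u and a second-order direction ε²•w is fourth-order accurate: the function ε ↦ f(x₀ + ε•u + ε²•w) − f(x₀ + ε•u) − f(x₀ + ε²•w) + f(x₀) − ε³ • f″(x₀)[u,w] is O(ε⁴) as ε → 0. -/

import Mathlib

open Topology Asymptotics

set_option maxHeartbeats 1000000 in
/-- Four-point mixed-derivative stencil with directions `ε•u` and `ε²•w`:
`f(x₀+ε•u+ε²•w) - f(x₀+ε•u) - f(x₀+ε²•w) + f(x₀) = ε³ • f″(x₀)[u,w] + O(ε⁴)`. -/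
theorem mixed_derivative_stencil_c1_c2
    {E F : Type*} [NormedAddCommGroup E] [NormedSpace ℝ E] [CompleteSpace E]
    [NormedAddCommGroup F] [NormedSpace ℝ F] [CompleteSpace F]
    (f : E → F) (x₀ u w : E)
    (hf : ContDiffAt ℝ 3 f x₀) :
    (fun ε : ℝ =>
        f (x₀ + ε • u + ε ^ 2 • w) - f (x₀ + ε • u) - f (x₀ + ε ^ 2 • w) + f x₀
          - ε ^ 3 • iteratedFDeriv ℝ 2 f x₀ ![u, w])
      =O[𝓝 (0 : ℝ)] fun ε => ε ^ 4 := by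
  set B := fderiv ℝ (fderiv ℝ f) with hBdef
  have h2 : ContDiffAt ℝ 2 (fderiv ℝ f) x₀ := hf.fderiv_right (by norm_num)
  have h1 : ContDiffAt ℝ 1 B x₀ := h2.fderiv_right (by norm_num)
  obtain ⟨K, t, ht, hK⟩ := h1.exists_lipschitzOnWith
  obtain ⟨s, hs, hfs⟩ := hf.contDiffOn (le_refl 3) (by simp)
  have hU : interior s ∩ interior t ∈ 𝓝 x₀ :=
    Filter.inter_mem (interior_mem_nhds.2 hs) (interior_mem_nhds.2 ht)
  obtain ⟨r, hr, hball⟩ := Metric.mem_nhds_iff.1 hU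
  have hCD : ∀ z ∈ Metric.ball x₀ r, ContDiffAt ℝ 3 f z := by
    intro z hz
    exact (hfs.mono interior_subset z (hball hz).1).contDiffAt
      (isOpen_interior.mem_nhds (hball hz).1)
  have hDf : ∀ z ∈ Metric.ball x₀ r, HasFDerivAt f (fderiv ℝ f z) z := fun z hz =>
    ((hCD z hz).differentiableAt (by norm_num)).hasFDerivAt
  have hDf' : ∀ z ∈ Metric.ball x₀ r, HasFDerivAt (fderiv ℝ f) (B z) z := fun z hz =>
    (((hCD z hz).fderiv_right (m := 2) (by norm_num)).differentiableAt (by norm_num)).hasFDerivAt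
  have hx₀t : x₀ ∈ t := mem_of_mem_nhds ht
  have hLip : ∀ z ∈ Metric.ball x₀ r, ‖B z - B x₀‖ ≤ K * ‖z - x₀‖ := by
    intro z hz
    have := hK.dist_le_mul z (interior_subset (hball hz).2) x₀ hx₀t
    rwa [dist_eq_norm, dist_eq_norm] at this
  have hmem : ∀ y : E, ‖y‖ < r → x₀ + y ∈ Metric.ball x₀ r := by
    intro y hy
    simp [Metric.mem_ball, dist_eq_norm, hy]
  have hsmul : ∀ (τ : ℝ), 0 ≤ τ → τ ≤ 1 → ∀ q : E, ‖τ • q‖ ≤ ‖q‖ := by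
    intro τ h0 h1 q
    rw [norm_smul, Real.norm_eq_abs, abs_of_nonneg h0]
    nlinarith [norm_nonneg q]
  -- key pointwise estimate
  have key : ∀ a b : E, ‖a‖ + ‖b‖ < r →
      ‖f (x₀ + a + b) - f (x₀ + a) - f (x₀ + b) + f x₀ - B x₀ b a‖
        ≤ K * ((‖a‖ + ‖b‖) * (‖b‖ * ‖a‖)) := by
    intro a b hab
    have ha' : (0:ℝ) ≤ ‖a‖ := norm_nonneg a
    have hb' : (0:ℝ) ≤ ‖b‖ := norm_nonneg b
    -- inner mean value estimate
    have inner : ∀ c : E, ‖c‖ ≤ ‖a‖ →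
        ‖fderiv ℝ f (x₀ + c + b) - fderiv ℝ f (x₀ + c) - B x₀ b‖
          ≤ K * (‖a‖ + ‖b‖) * ‖b‖ := by
      intro c hc
      have hznorm : ∀ z ∈ segment ℝ (x₀ + c) (x₀ + c + b), ‖z - x₀‖ ≤ ‖a‖ + ‖b‖ := by
        intro z hz
        rw [segment_eq_image'] at hz
        obtain ⟨τ, hτ, rfl⟩ := hz
        have hsub : x₀ + c + b - (x₀ + c) = b := by abel
        rw [hsub]
        have he : x₀ + c + τ • b - x₀ = c + τ • b := by abel
        rw [he]
        calc ‖c + τ • b‖ ≤ ‖c‖ + ‖τ • b‖ := norm_add_le _ _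
          _ ≤ ‖a‖ + ‖b‖ := add_le_add hc (hsmul τ hτ.1 hτ.2 b)
      have hseg : segment ℝ (x₀ + c) (x₀ + c + b) ⊆ Metric.ball x₀ r := by
        intro z hz
        rw [Metric.mem_ball, dist_eq_norm]
        exact lt_of_le_of_lt (hznorm z hz) hab
      have hder : ∀ z ∈ segment ℝ (x₀ + c) (x₀ + c + b),
          HasFDerivWithinAt (fderiv ℝ f) (B z) (segment ℝ (x₀ + c) (x₀ + c + b)) z :=
        fun z hz => (hDf' z (hseg hz)).hasFDerivWithinAt
      have hbd : ∀ z ∈ segment ℝ (x₀ + c) (x₀ + c + b),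
          ‖B z - B x₀‖ ≤ K * (‖a‖ + ‖b‖) := by
        intro z hz
        refine (hLip z (hseg hz)).trans ?_
        have := hznorm z hz
        gcongr
      have hmv := (convex_segment (x₀ + c) (x₀ + c + b)).norm_image_sub_le_of_norm_hasFDerivWithin_le'
        hder hbd (left_mem_segment ℝ _ _) (right_mem_segment ℝ _ _)
      have hsub : x₀ + c + b - (x₀ + c) = b := by abel
      rw [hsub] at hmv
      exact hmv
    -- outer mean value estimate
    set ψ : E → F := fun c => f (x₀ + c + b) - f (x₀ + c) - B x₀ b c with hψ
    have hψder : ∀ c : E, ‖c‖ ≤ ‖a‖ →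
        HasFDerivAt ψ (fderiv ℝ f (x₀ + c + b) - fderiv ℝ f (x₀ + c) - B x₀ b) c := by
      intro c hc
      have haff1 : HasFDerivAt (fun c : E => x₀ + c + b) (ContinuousLinearMap.id ℝ E) c := by
        simpa using ((hasFDerivAt_id c).const_add x₀).add_const b
      have haff2 : HasFDerivAt (fun c : E => x₀ + c) (ContinuousLinearMap.id ℝ E) c := by
        simpa using (hasFDerivAt_id c).const_add x₀
      have hz1 : x₀ + c + b ∈ Metric.ball x₀ r := by
        have heq : x₀ + c + b = x₀ + (c + b) := by abel
        rw [heq]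
        apply hmem
        exact lt_of_le_of_lt ((norm_add_le c b).trans (by gcongr)) hab
      have hz2 : x₀ + c ∈ Metric.ball x₀ r := by
        apply hmem
        linarith
      have h1' : HasFDerivAt (fun c : E => f (x₀ + c + b)) (fderiv ℝ f (x₀ + c + b)) c := by
        simpa [Function.comp_def] using (hDf _ hz1).comp c haff1
      have h2' : HasFDerivAt (fun c : E => f (x₀ + c)) (fderiv ℝ f (x₀ + c)) c := by
        simpa [Function.comp_def] using (hDf _ hz2).comp c haff2
      have h3' : HasFDerivAt (fun c : E => B x₀ b c) (B x₀ b) c :=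
        (B x₀ b).hasFDerivAt
      exact (h1'.sub h2').sub h3'
    have hsegnorm : ∀ c ∈ segment ℝ (0 : E) a, ‖c‖ ≤ ‖a‖ := by
      intro c hc
      rw [segment_eq_image'] at hc
      obtain ⟨τ, hτ, rfl⟩ := hc
      simpa using hsmul τ hτ.1 hτ.2 a
    have hder2 : ∀ c ∈ segment ℝ (0 : E) a,
        HasFDerivWithinAt ψ (fderiv ℝ f (x₀ + c + b) - fderiv ℝ f (x₀ + c) - B x₀ b)
          (segment ℝ (0 : E) a) c :=
      fun c hc => (hψder c (hsegnorm c hc)).hasFDerivWithinAt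
    have hbd2 : ∀ c ∈ segment ℝ (0 : E) a,
        ‖fderiv ℝ f (x₀ + c + b) - fderiv ℝ f (x₀ + c) - B x₀ b‖ ≤ K * (‖a‖ + ‖b‖) * ‖b‖ :=
      fun c hc => inner c (hsegnorm c hc)
    have hmv2 := (convex_segment (0 : E) a).norm_image_sub_le_of_norm_hasFDerivWithin_le
      hder2 hbd2 (left_mem_segment ℝ _ _) (right_mem_segment ℝ _ _)
    have hrw : f (x₀ + a + b) - f (x₀ + a) - f (x₀ + b) + f x₀ - B x₀ b a = ψ a - ψ 0 := by
      simp only [hψ, map_zero, add_zero]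
      abel
    rw [hrw]
    calc ‖ψ a - ψ 0‖ ≤ K * (‖a‖ + ‖b‖) * ‖b‖ * ‖a - 0‖ := hmv2
      _ = K * ((‖a‖ + ‖b‖) * (‖b‖ * ‖a‖)) := by rw [sub_zero]; ring
  -- symmetry and iterated derivative
  have hsymm : B x₀ w u = B x₀ u w := (hf.isSymmSndFDerivAt (by norm_num)) w u
  have hiter : iteratedFDeriv ℝ 2 f x₀ ![u, w] = B x₀ u w := by
    rw [iteratedFDeriv_two_apply]
    simp [hBdef]
  -- conclusion
  rw [Asymptotics.isBigO_iff]
  refine ⟨K * ((‖u‖ + ‖w‖) * (‖w‖ * ‖u‖)), ?_⟩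
  have hδ : (0:ℝ) < min 1 (r / (‖u‖ + ‖w‖ + 1)) :=
    lt_min one_pos (div_pos hr (by positivity))
  filter_upwards [Metric.ball_mem_nhds (0:ℝ) hδ] with ε hε
  rw [Metric.mem_ball, dist_zero_right, Real.norm_eq_abs, lt_min_iff] at hε
  obtain ⟨hε1, hε2⟩ := hε
  set A := |ε| with hA
  have hA0 : 0 ≤ A := abs_nonneg ε
  have hA2 : A ^ 2 ≤ A := by nlinarith
  have hna : ‖ε • u‖ = A * ‖u‖ := by rw [norm_smul, Real.norm_eq_abs]
  have hnb : ‖ε ^ 2 • w‖ = A ^ 2 * ‖w‖ := by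
    rw [norm_smul, Real.norm_eq_abs, abs_pow]
  have hab : ‖ε • u‖ + ‖ε ^ 2 • w‖ < r := by
    rw [hna, hnb]
    have h1 : A * ‖u‖ + A ^ 2 * ‖w‖ ≤ A * (‖u‖ + ‖w‖ + 1) := by
      have h := mul_le_mul_of_nonneg_right hA2 (norm_nonneg w)
      have e : A * (‖u‖ + ‖w‖ + 1) = A * ‖u‖ + A * ‖w‖ + A := by ring
      linarith
    have h2 : A * (‖u‖ + ‖w‖ + 1) < r := by
      rw [lt_div_iff₀ (by positivity)] at hε2
      exact hε2
    linarith
  have hkey := key (ε • u) (ε ^ 2 • w) hab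
  have hBab : B x₀ (ε ^ 2 • w) (ε • u) = ε ^ 3 • B x₀ w u := by
    simp only [map_smul, ContinuousLinearMap.smul_apply, smul_smul]
    congr 1
    ring
  have hterm : ε ^ 3 • iteratedFDeriv ℝ 2 f x₀ ![u, w] = B x₀ (ε ^ 2 • w) (ε • u) := by
    rw [hiter, ← hsymm, hBab]
  rw [hterm]
  refine hkey.trans ?_
  rw [hna, hnb, Real.norm_eq_abs, abs_pow, ← hA]
  have hgoal : (K:ℝ) * ((A * ‖u‖ + A ^ 2 * ‖w‖) * (A ^ 2 * ‖w‖ * (A * ‖u‖)))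
      ≤ K * ((‖u‖ + ‖w‖) * (‖w‖ * ‖u‖)) * A ^ 4 := by
    have hK0 : (0:ℝ) ≤ K := K.coe_nonneg
    have hs1 : A * ‖u‖ + A ^ 2 * ‖w‖ ≤ A * (‖u‖ + ‖w‖) := by
      have h := mul_le_mul_of_nonneg_right hA2 (norm_nonneg w)
      have e : A * (‖u‖ + ‖w‖) = A * ‖u‖ + A * ‖w‖ := by ring
      linarith
    have hY : 0 ≤ A ^ 2 * ‖w‖ * (A * ‖u‖) :=
      mul_nonneg (mul_nonneg (sq_nonneg A) (norm_nonneg w)) (mul_nonneg hA0 (norm_nonneg u))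
    calc (K:ℝ) * ((A * ‖u‖ + A ^ 2 * ‖w‖) * (A ^ 2 * ‖w‖ * (A * ‖u‖)))
        ≤ K * ((A * (‖u‖ + ‖w‖)) * (A ^ 2 * ‖w‖ * (A * ‖u‖))) :=
          mul_le_mul_of_nonneg_left (mul_le_mul_of_nonneg_right hs1 hY) hK0
      _ = K * ((‖u‖ + ‖w‖) * (‖w‖ * ‖u‖)) * A ^ 4 := by ring
  exact hgoal
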